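/- Let $\Theta : \mathbb{R}^n \to \mathbb{R} \cup \{+\infty\}$ be a closed proper convex function whose set of minimizers $X^*$ is nonempty, convex, closed, and bounded, with minimum value $\Theta_{opt}$. Then $\lim_{s \to \Theta_{opt}^+} \max_{x \in \mathrm{cl}(\mathrm{Lev}(\Theta, s))} \|x - \mathrm{Proj}_{X^*}(x)\| = 0$, where $\mathrm{Proj}_{X^*}(x)$ is the Euclidean projection of $x$ onto $X^*$. -/
import Mathlib


open Filter Topology Bornology

theorem aux_bounded_sublevel (n : ℕ) (D : Set (EuclideanSpace ℝ (Fin n)))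
    (Θ : EuclideanSpace ℝ (Fin n) → ℝ)
    (hconv : ConvexOn ℝ D Θ)
    (hclosed : IsClosed {p : EuclideanSpace ℝ (Fin n) × ℝ | p.1 ∈ D ∧ Θ p.1 ≤ p.2})
    (Θopt : ℝ)
    (xs : EuclideanSpace ℝ (Fin n)) (hxsD : xs ∈ D) (hΘxs : Θ xs = Θopt)
    (hmin : ∀ y ∈ D, Θopt ≤ Θ y)
    (R : ℝ) (hR : ∀ z, z ∈ D → Θ z ≤ Θopt → dist z xs ≤ R)
    (c : ℝ) :
    Bornology.IsBounded {x | x ∈ D ∧ Θ x ≤ c} := by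
  by_contra hub
  rw [Metric.isBounded_iff_subset_closedBall xs] at hub
  push_neg at hub
  have hub' : ∀ k : ℕ, ∃ x, (x ∈ D ∧ Θ x ≤ c) ∧ (k : ℝ) < dist x xs := by
    intro k
    obtain ⟨x, hx, hxk⟩ := Set.not_subset.mp (hub k)
    exact ⟨x, hx, by simpa [Metric.mem_closedBall, not_le] using hxk⟩
  choose x hx hxk using hub'
  set r : ℕ → ℝ := fun k => ‖x k - xs‖ with hr
  have hrpos : ∀ k, 0 < r k := by
    intro k
    have := hxk k
    rw [dist_eq_norm] at this
    exact lt_of_le_of_lt (Nat.cast_nonneg k) this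
  have hrk : ∀ k : ℕ, (k : ℝ) < r k := by
    intro k; have := hxk k; rwa [dist_eq_norm] at this
  set d : ℕ → EuclideanSpace ℝ (Fin n) := fun k => (r k)⁻¹ • (x k - xs) with hd
  have hdnorm : ∀ k, ‖d k‖ = 1 := by
    intro k
    rw [hd]
    simp only [norm_smul, norm_inv, Real.norm_eq_abs, abs_of_pos (hrpos k)]
    exact inv_mul_cancel₀ (hrpos k).ne'
  have hdball : ∀ k, d k ∈ Metric.closedBall (0 : EuclideanSpace ℝ (Fin n)) 1 := by
    intro k; simp [Metric.mem_closedBall, dist_eq_norm, hdnorm k]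
  obtain ⟨dl, -, φ, hφ, hdl⟩ := tendsto_subseq_of_bounded
    (Metric.isBounded_closedBall (x := (0 : EuclideanSpace ℝ (Fin n))) (r := 1)) hdball
  have hdlnorm : ‖dl‖ = 1 := by
    have : Tendsto (fun k => ‖d (φ k)‖) atTop (𝓝 ‖dl‖) := hdl.norm
    have h1 : Tendsto (fun _ : ℕ => (1 : ℝ)) atTop (𝓝 ‖dl‖) := by
      simpa [hdnorm] using this
    exact tendsto_nhds_unique h1 tendsto_const_nhds
  set t : ℝ := R + 1 with ht
  have htpos : 0 < t := by
    have : 0 ≤ R := le_trans (dist_nonneg) (hR xs hxsD hΘxs.le)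
    linarith
  -- the point xs + t • dl belongs to D and is a minimizer
  set lam : ℕ → ℝ := fun k => t / r (φ k) with hlam
  have hrφ : Tendsto (fun k => r (φ k)) atTop atTop := by
    apply tendsto_atTop_mono (f := fun k : ℕ => (k : ℝ))
    · intro k
      exact le_trans (Nat.cast_le.mpr (hφ.id_le k)) (hrk (φ k)).le
    · exact tendsto_natCast_atTop_atTop
  have hlam0 : Tendsto lam atTop (𝓝 0) := Tendsto.div_atTop tendsto_const_nhds hrφ
  have hlamev : ∀ᶠ k in atTop, lam k ≤ 1 := by
    filter_upwards [hrφ.eventually_ge_atTop t] with k hk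
    rw [hlam]
    exact div_le_one_of_le₀ hk (hrpos _).le
  have hlampos : ∀ k, 0 < lam k := fun k => div_pos htpos (hrpos _)
  set y : ℕ → EuclideanSpace ℝ (Fin n) := fun k => xs + t • d (φ k) with hy
  have hyconv : ∀ k, y k = (1 - lam k) • xs + lam k • x (φ k) := by
    intro k
    rw [hy, hlam, hd]
    simp only
    rw [div_eq_mul_inv, mul_smul, smul_smul]
    rw [mul_comm]
    module
  have hytend : Tendsto y atTop (𝓝 (xs + t • dl)) :=
    tendsto_const_nhds.add (hdl.const_smul t)
  have hwtend : Tendsto (fun k => (1 - lam k) * Θopt + lam k * c) atTop (𝓝 Θopt) := by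
    have : Tendsto (fun k => (1 - lam k) * Θopt + lam k * c) atTop (𝓝 ((1 - 0) * Θopt + 0 * c)) :=
      (((tendsto_const_nhds.sub hlam0).mul tendsto_const_nhds).add (hlam0.mul tendsto_const_nhds))
    simpa using this
  have hepi : (xs + t • dl, Θopt) ∈ {p : EuclideanSpace ℝ (Fin n) × ℝ | p.1 ∈ D ∧ Θ p.1 ≤ p.2} := by
    apply hclosed.mem_of_tendsto (hytend.prodMk_nhds hwtend)
    filter_upwards [hlamev] with k hk
    have hmemD : y k ∈ D := by
      rw [hyconv k]
      exact hconv.1 hxsD (hx (φ k)).1 (by linarith [hlampos k]) (hlampos k).le (by ring)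
    have hΘy : Θ (y k) ≤ (1 - lam k) * Θ xs + lam k * Θ (x (φ k)) := by
      rw [hyconv k]
      exact hconv.2 hxsD (hx (φ k)).1 (by linarith [hlampos k]) (hlampos k).le (by ring)
    refine ⟨hmemD, hΘy.trans ?_⟩
    have h1 : (1 - lam k) * Θ xs = (1 - lam k) * Θopt := by rw [hΘxs]
    have h2 : lam k * Θ (x (φ k)) ≤ lam k * c :=
      mul_le_mul_of_nonneg_left (hx (φ k)).2 (hlampos k).le
    linarith [h2, h1.le, h1.ge]
  -- contradiction with hR
  have := hR _ hepi.1 hepi.2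
  rw [dist_eq_norm] at this
  have : ‖xs + t • dl - xs‖ ≤ R := this
  rw [add_sub_cancel_left, norm_smul, Real.norm_eq_abs, abs_of_pos htpos, hdlnorm, mul_one] at this
  linarith

/-- Theorem 6, equation (52): the maximal distance from points of
`cl {x ∈ D | Θ x < s}` to the (nonempty, closed, convex, bounded) optimal set
`X*` tends to `0` as `s → Θopt⁺`. Here `P` is the Euclidean projection onto
`X*`, characterized by realizing the distance. -/
theorem stmt_9 (n : ℕ) (D : Set (EuclideanSpace ℝ (Fin n)))
    (Θ : EuclideanSpace ℝ (Fin n) → ℝ)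
    (hproper : D.Nonempty)
    (hconv : ConvexOn ℝ D Θ)
    (hclosed : IsClosed {p : EuclideanSpace ℝ (Fin n) × ℝ | p.1 ∈ D ∧ Θ p.1 ≤ p.2})
    (Θopt : ℝ) (Xstar : Set (EuclideanSpace ℝ (Fin n)))
    (hXstar : Xstar = {x | x ∈ D ∧ Θ x = Θopt ∧ ∀ y ∈ D, Θ x ≤ Θ y})
    (hXne : Xstar.Nonempty) (hXclosed : IsClosed Xstar)
    (hXconv : Convex ℝ Xstar) (hXbdd : Bornology.IsBounded Xstar)
    (P : EuclideanSpace ℝ (Fin n) → EuclideanSpace ℝ (Fin n))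
    (hP : ∀ x, P x ∈ Xstar ∧ ∀ y ∈ Xstar, dist x (P x) ≤ dist x y) :
    Filter.Tendsto
      (fun s : ℝ => ⨆ x ∈ closure {x | x ∈ D ∧ Θ x < s}, edist x (P x))
      (nhdsWithin Θopt (Set.Ioi Θopt)) (nhds 0) := by
  obtain ⟨xs, hxs⟩ := hXne
  rw [hXstar] at hxs
  obtain ⟨hxsD, hΘxs, hxsmin⟩ := hxs
  have hmin : ∀ y ∈ D, Θopt ≤ Θ y := fun y hy => hΘxs ▸ hxsmin y hy
  -- bound for the optimal set
  obtain ⟨R, hRsub⟩ := (Metric.isBounded_iff_subset_closedBall xs).mp hXbdd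
  have hR : ∀ z, z ∈ D → Θ z ≤ Θopt → dist z xs ≤ R := by
    intro z hzD hzΘ
    have hzX : z ∈ Xstar := by
      rw [hXstar]
      refine ⟨hzD, le_antisymm hzΘ (hmin z hzD), fun y hy => ?_⟩
      exact le_trans hzΘ (hmin y hy)
    exact hRsub hzX
  have hbdd := aux_bounded_sublevel n D Θ hconv hclosed Θopt xs hxsD hΘxs hmin R hR (Θopt + 1)
  -- sublevel slices are closed
  have hslice : ∀ s : ℝ, IsClosed {x | x ∈ D ∧ Θ x ≤ s} := by
    intro s
    have : {x | x ∈ D ∧ Θ x ≤ s}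
        = (fun x => (x, s)) ⁻¹' {p : EuclideanSpace ℝ (Fin n) × ℝ | p.1 ∈ D ∧ Θ p.1 ≤ p.2} := rfl
    rw [this]
    exact hclosed.preimage (continuous_id.prodMk continuous_const)
  have hclsub : ∀ s : ℝ, closure {x | x ∈ D ∧ Θ x < s} ⊆ {x | x ∈ D ∧ Θ x ≤ s} := fun s =>
    closure_minimal (fun x hx => ⟨hx.1, hx.2.le⟩) (hslice s)
  -- key claim
  have key : ∀ ε : ℝ, 0 < ε →
      ∃ s, Θopt < s ∧ ∀ x ∈ closure {x | x ∈ D ∧ Θ x < s}, dist x (P x) ≤ ε := by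
    intro ε hε
    by_contra hcon
    push_neg at hcon
    have hcon' : ∀ k : ℕ, ∃ z, z ∈ closure {x | x ∈ D ∧ Θ x < Θopt + 1 / (k + 1)} ∧
        ε < dist z (P z) := by
      intro k
      obtain ⟨z, hz1, hz2⟩ := hcon (Θopt + 1 / (k + 1))
        (by have : (0:ℝ) < 1 / (k + 1) := by positivity
            linarith)
      exact ⟨z, hz1, hz2⟩
    choose z hzmem hzdist using hcon'
    have hsk : ∀ k : ℕ, z k ∈ D ∧ Θ (z k) ≤ Θopt + 1 / (k + 1) := fun k => hclsub _ (hzmem k)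
    have hL : ∀ k : ℕ, z k ∈ {x | x ∈ D ∧ Θ x ≤ Θopt + 1} := by
      intro k
      refine ⟨(hsk k).1, (hsk k).2.trans ?_⟩
      have : (1 : ℝ) / (k + 1) ≤ 1 := by
        rw [div_le_one (by positivity)]; linarith [Nat.cast_nonneg (α := ℝ) k]
      linarith
    obtain ⟨a, -, φ, hφ, hza⟩ := tendsto_subseq_of_bounded hbdd hL
    have hstend : Tendsto (fun k : ℕ => Θopt + 1 / ((φ k : ℝ) + 1)) atTop (𝓝 Θopt) := by
      have h1 : Tendsto (fun k : ℕ => ((φ k : ℝ) + 1)) atTop atTop := by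
        apply tendsto_atTop_add_const_right
        exact tendsto_natCast_atTop_atTop.comp hφ.tendsto_atTop
      have := Tendsto.div_atTop (tendsto_const_nhds (x := (1:ℝ))) h1
      simpa using tendsto_const_nhds.add this
    have ha : a ∈ D ∧ Θ a ≤ Θopt := by
      have := hclosed.mem_of_tendsto (hza.prodMk_nhds hstend)
        (Filter.Eventually.of_forall fun k => (hsk (φ k) : _))
      exact this
    have haX : a ∈ Xstar := by
      rw [hXstar]
      exact ⟨ha.1, le_antisymm ha.2 (hmin a ha.1), fun y hy => le_trans ha.2 (hmin y hy)⟩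
    have hdtend : Tendsto (fun k => dist (z (φ k)) a) atTop (𝓝 0) := by
      have := hza.dist (tendsto_const_nhds (x := a))
      simpa using this
    obtain ⟨k, hk⟩ := (hdtend.eventually (eventually_lt_nhds hε)).exists
    · exact absurd ((hzdist (φ k)).trans_le ((hP (z (φ k))).2 a haX)) (not_lt.mpr hk.le)
  -- conclude
  rw [ENNReal.tendsto_nhds_zero]
  intro ε hε
  obtain ⟨r, hr0, hrε⟩ : ∃ r : ℝ, 0 < r ∧ ENNReal.ofReal r ≤ ε := by
    rcases eq_or_ne ε ⊤ with h | h
    · exact ⟨1, one_pos, by simp [h]⟩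
    · exact ⟨ε.toReal, ENNReal.toReal_pos hε.ne' h, by rw [ENNReal.ofReal_toReal h]⟩
  obtain ⟨s, hs, hsd⟩ := key r hr0
  filter_upwards [Ioo_mem_nhdsGT_of_mem ⟨le_refl Θopt, hs⟩] with u hu
  refine iSup₂_le fun x hx => ?_
  have hsub : {y | y ∈ D ∧ Θ y < u} ⊆ {y | y ∈ D ∧ Θ y < s} :=
    fun y hy => ⟨hy.1, hy.2.trans hu.2⟩
  have hx' : x ∈ closure {x | x ∈ D ∧ Θ x < s} := closure_mono hsub hx
  calc edist x (P x) = ENNReal.ofReal (dist x (P x)) := edist_dist _ _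
    _ ≤ ENNReal.ofReal r := ENNReal.ofReal_le_ofReal (hsd x hx')
    _ ≤ ε := hrε
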